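/- Let A, B, C be positive real numbers and let q < 0 < p. Define f(t) = A·t^p + B·t^q − C for t > 0 and M(p,q) = (−q/p)^{p/(p−q)} + (−q/p)^{q/(p−q)}. If A^{−q}·B^{p} < (C/M(p,q))^{p−q}, then f attains a negative minimum on (0,∞) at the point t̄ = (−qB/(pA))^{1/(p−q)}; that is, f(t̄) < 0 and f(t̄) ≤ f(t) for all t > 0. -/

import Mathlib

open Real Set

theorem stmt_0 (A B C p q : ℝ) (hA : 0 < A) (hB : 0 < B) (hC : 0 < C)
    (hq : q < 0) (hp : 0 < p)
    (f : ℝ → ℝ) (hf : ∀ t : ℝ, 0 < t → f t = A * t ^ p + B * t ^ q - C)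
    (M : ℝ) (hM : M = (-q / p) ^ (p / (p - q)) + (-q / p) ^ (q / (p - q)))
    (hcond : A ^ (-q) * B ^ p < (C / M) ^ (p - q))
    (tbar : ℝ) (htbar : tbar = (-q * B / (p * A)) ^ (1 / (p - q))) :
    f tbar < 0 ∧ ∀ t : ℝ, 0 < t → f tbar ≤ f t := by
  have hD : 0 < p - q := by linarith
  set D := p - q with hDdef
  have hDne : D ≠ 0 := ne_of_gt hD
  have hqpos : 0 < -q := by linarith
  have hX0 : 0 < -q * B / (p * A) := by positivity
  have ht : 0 < tbar := by rw [htbar]; positivity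
  set a : ℝ := -q / D with hadef
  set b : ℝ := p / D with hbdef
  have ha : 0 < a := by positivity
  have hb : 0 < b := by positivity
  have hab : a + b = 1 := by
    rw [hadef, hbdef]; field_simp; rw [hDdef]; ring
  -- tbar ^ D = X0
  have htD : tbar ^ D = -q * B / (p * A) := by
    rw [htbar, ← Real.rpow_mul hX0.le, one_div, inv_mul_cancel₀ hDne, Real.rpow_one]
  -- constancy of the geometric mean
  have hconst : ∀ t : ℝ, 0 < t →
      (A * t ^ p / a) ^ a * (B * t ^ q / b) ^ b = (A / a) ^ a * (B / b) ^ b := by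
    intro t htp
    have h1 : A * t ^ p / a = (A / a) * t ^ p := by ring
    have h2 : B * t ^ q / b = (B / b) * t ^ q := by ring
    rw [h1, h2, Real.mul_rpow (by positivity) (by positivity),
        Real.mul_rpow (by positivity) (by positivity),
        ← Real.rpow_mul htp.le, ← Real.rpow_mul htp.le]
    have hpq0 : p * a + q * b = 0 := by
      rw [hadef, hbdef]; field_simp; ring
    have : t ^ (p * a) * t ^ (q * b) = 1 := by
      rw [← Real.rpow_add htp, hpq0, Real.rpow_zero]
    calc (A / a) ^ a * t ^ (p * a) * ((B / b) ^ b * t ^ (q * b))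
        = (A / a) ^ a * (B / b) ^ b * (t ^ (p * a) * t ^ (q * b)) := by ring
      _ = (A / a) ^ a * (B / b) ^ b := by rw [this, mul_one]
  -- lower bound from AM-GM
  have key : ∀ t : ℝ, 0 < t → (A / a) ^ a * (B / b) ^ b ≤ A * t ^ p + B * t ^ q := by
    intro t htp
    have h1 := Real.geom_mean_le_arith_mean2_weighted ha.le hb.le
      (by positivity : (0:ℝ) ≤ A * t ^ p / a) (by positivity : (0:ℝ) ≤ B * t ^ q / b) hab
    rw [hconst t htp] at h1
    have h2 : a * (A * t ^ p / a) + b * (B * t ^ q / b) = A * t ^ p + B * t ^ q := by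
      field_simp
    linarith [h1, h2.symm ▸ h1]
  -- equality at tbar
  have htp' : tbar ^ p = tbar ^ q * (-q * B / (p * A)) := by
    rw [← htD, ← Real.rpow_add ht]
    congr 1
    rw [hDdef]; ring
  have htq_pos : 0 < tbar ^ q := Real.rpow_pos_of_pos ht q
  have heq : B * tbar ^ q / b = A * tbar ^ p / a := by
    rw [htp', hadef, hbdef]
    field_simp [hp.ne', hA.ne', hq.ne, sub_ne_zero.mpr (ne_of_gt (by linarith : q < p))]
  set Z : ℝ := A * tbar ^ p / a with hZdef
  have hZpos : 0 < Z := by positivity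
  have hsum : A * tbar ^ p + B * tbar ^ q = Z := by
    have h1 : A * tbar ^ p = a * Z := by rw [hZdef]; field_simp
    have h2 : B * tbar ^ q = b * Z := by
      rw [← heq] at *; field_simp
    rw [h1, h2, ← add_mul, hab, one_mul]
  have hLZ : (A / a) ^ a * (B / b) ^ b = Z := by
    rw [← hconst tbar ht, heq, ← Real.rpow_add hZpos, hab, Real.rpow_one]
  -- negativity
  have hqp : 0 < -q / p := div_pos hqpos hp
  have hMpos : 0 < M := by
    rw [hM]
    have := Real.rpow_pos_of_pos hqp (p / (p - q))
    have := Real.rpow_pos_of_pos hqp (q / (p - q))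
    linarith
  have hABpos : (0:ℝ) < A ^ (-q) * B ^ p := by positivity
  have hK : (A ^ (-q) * B ^ p) ^ (1 / D) < C / M := by
    have h1 := Real.rpow_lt_rpow hABpos.le hcond (by positivity : (0:ℝ) < 1 / D)
    rwa [← Real.rpow_mul (le_of_lt (div_pos hC hMpos)), mul_one_div, div_self hDne,
      Real.rpow_one] at h1
  have hlogt : Real.log tbar = (Real.log (-q) + Real.log B - Real.log p - Real.log A) / D := by
    rw [htbar, Real.log_rpow hX0, Real.log_div (by positivity) (by positivity),
      Real.log_mul (ne_of_gt hqpos) hB.ne', Real.log_mul hp.ne' hA.ne']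
    ring
  have e1 : A * tbar ^ p = (-q / p) ^ (p / D) * (A ^ (-q) * B ^ p) ^ (1 / D) := by
    have hAe : A * tbar ^ p = Real.exp (Real.log A + Real.log tbar * p) := by
      rw [Real.exp_add, Real.exp_log hA, Real.rpow_def_of_pos ht]
    rw [hAe, Real.rpow_def_of_pos hqp, Real.rpow_def_of_pos hABpos, ← Real.exp_add]
    congr 1
    rw [hlogt, Real.log_div (ne_of_gt hqpos) hp.ne',
      Real.log_mul (by positivity) (by positivity), Real.log_rpow hA, Real.log_rpow hB]
    field_simp
    ring
  have e2 : B * tbar ^ q = (-q / p) ^ (q / D) * (A ^ (-q) * B ^ p) ^ (1 / D) := by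
    have hBe : B * tbar ^ q = Real.exp (Real.log B + Real.log tbar * q) := by
      rw [Real.exp_add, Real.exp_log hB, Real.rpow_def_of_pos ht]
    rw [hBe, Real.rpow_def_of_pos hqp, Real.rpow_def_of_pos hABpos, ← Real.exp_add]
    congr 1
    rw [hlogt, Real.log_div (ne_of_gt hqpos) hp.ne',
      Real.log_mul (by positivity) (by positivity), Real.log_rpow hA, Real.log_rpow hB]
    field_simp
    ring
  have hZMK : Z = M * (A ^ (-q) * B ^ p) ^ (1 / D) := by
    rw [← hsum, e1, e2, hM]
    ring
  have hZC : Z < C := by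
    rw [hZMK]
    calc M * (A ^ (-q) * B ^ p) ^ (1 / D) < M * (C / M) :=
          mul_lt_mul_of_pos_left hK hMpos
      _ = C := by field_simp
  constructor
  · rw [hf tbar ht, hsum]; linarith
  · intro t htp
    rw [hf t htp, hf tbar ht, hsum]
    have := key t htp
    rw [hLZ] at this
    linarith
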